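/- Let S_n be a random walk with i.i.d. ±1 steps, P[step = 1] = p. For every n ≥ 1, P[S_k < 0 for all 1 ≤ k ≤ n] ≥ (1/n) · P[S_n < 0]. -/

import Mathlib

open MeasureTheory ProbabilityTheory Filter

/-- Cycle lemma (existence form): if the total sum over `range n` is negative,
some cyclic rotation has all partial sums negative. -/
lemma cycle_exists (n : ℕ) (hn : 0 < n) (f : ℕ → ℤ)
    (hsum : ∑ i ∈ Finset.range n, f i < 0) :
    ∃ r < n, ∀ k, 1 ≤ k → k ≤ n → ∑ i ∈ Finset.range k, f ((r + i) % n) < 0 := by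
  set G : ℕ → ℤ := fun m => ∑ i ∈ Finset.range m, f (i % n) with hG
  have hGn : G n < 0 := by
    have h : G n = ∑ i ∈ Finset.range n, f i :=
      Finset.sum_congr rfl fun i hi => by
        rw [Nat.mod_eq_of_lt (Finset.mem_range.mp hi)]
    rw [h]; exact hsum
  have hGadd : ∀ a b : ℕ, G (a + b) = G a + ∑ i ∈ Finset.range b, f ((a + i) % n) :=
    fun a b => Finset.sum_range_add (fun i => f (i % n)) a b
  have hper : ∀ j, G (n + j) = G n + G j := by
    intro j
    rw [hGadd n j]
    congr 1
    exact Finset.sum_congr rfl fun i _ => by rw [Nat.add_mod_left]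
  obtain ⟨r0, hr0mem, hr0max⟩ :=
    Finset.exists_max_image (Finset.range n) G ⟨0, Finset.mem_range.mpr hn⟩
  set T := (Finset.range n).filter (fun j => G j = G r0) with hT
  have hTne : T.Nonempty := ⟨r0, Finset.mem_filter.mpr ⟨hr0mem, rfl⟩⟩
  set r := T.max' hTne with hr
  have hrmem := T.max'_mem hTne
  have hrval : G r = G r0 := (Finset.mem_filter.mp hrmem).2
  have hrlt : r < n := Finset.mem_range.mp (Finset.mem_filter.mp hrmem).1
  have hmax : ∀ j, j < n → G j ≤ G r := fun j hj =>
    hrval ▸ hr0max j (Finset.mem_range.mpr hj)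
  have hlast : ∀ j, r < j → j < n → G j < G r := by
    intro j hrj hjn
    rcases lt_or_eq_of_le (hmax j hjn) with h | h
    · exact h
    · exfalso
      have hjT : j ∈ T := Finset.mem_filter.mpr ⟨Finset.mem_range.mpr hjn, h.trans hrval⟩
      have := T.le_max' j hjT
      omega
  refine ⟨r, hrlt, ?_⟩
  intro k hk1 hkn
  have key : G (r + k) < G r := by
    rcases lt_trichotomy (r + k) n with h | h | h
    · exact hlast _ (by omega) h
    · have h0 : (0:ℤ) ≤ G r := by
        have := hmax 0 hn
        simpa [hG] using this
      rw [h]; linarith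
    · have hj : r + k = n + (r + k - n) := by omega
      have hle : G (r + k - n) ≤ G r := hmax _ (by omega)
      rw [hj, hper]
      linarith
  have := hGadd r k
  linarith

theorem stmt11 {Ω : Type*} [MeasurableSpace Ω] (μ : Measure Ω) [IsProbabilityMeasure μ]
    (p : ℝ) (hp0 : 0 < p) (hp1 : p < 1)
    (X : ℕ → Ω → ℤ) (hmeas : ∀ i, Measurable (X i))
    (hindep : iIndepFun X μ)
    (hval : ∀ i ω, X i ω = 1 ∨ X i ω = -1)
    (hdist : ∀ i, μ {ω | X i ω = 1} = ENNReal.ofReal p)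
    (n : ℕ) (hn : 1 ≤ n) :
    (1 / (n:ℝ)) * (μ {ω | ∑ i ∈ Finset.range n, X i ω < 0}).toReal
      ≤ (μ {ω | ∀ k, 1 ≤ k → k ≤ n → ∑ i ∈ Finset.range k, X i ω < 0}).toReal := by
  classical
  have hn0 : 0 < n := hn
  haveI : NeZero n := ⟨by omega⟩
  -- all X i have the same distribution
  have hpre : ∀ i (s : Set ℤ), μ (X i ⁻¹' s)
      = (if (1:ℤ) ∈ s then ENNReal.ofReal p else 0)
        + (if (-1:ℤ) ∈ s then 1 - ENNReal.ofReal p else 0) := by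
    intro i s
    have h1 : {ω | X i ω = 1} = X i ⁻¹' {1} := rfl
    have hmeas1 : MeasurableSet {ω | X i ω = 1} :=
      (hmeas i) (MeasurableSet.of_discrete (s := ({1} : Set ℤ)))
    have hcompl : {ω | X i ω = -1} = {ω | X i ω = 1}ᶜ := by
      ext ω
      rcases hval i ω with h | h <;> simp [h]
    have hm1 : μ {ω | X i ω = -1} = 1 - ENNReal.ofReal p := by
      rw [hcompl, measure_compl hmeas1 (measure_ne_top μ _), hdist i, measure_univ]
    by_cases hs1 : (1:ℤ) ∈ s <;> by_cases hs2 : (-1:ℤ) ∈ s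
    · have : X i ⁻¹' s = Set.univ := by
        ext ω; rcases hval i ω with h | h <;> simp [Set.mem_preimage, h, hs1, hs2]
      rw [this, measure_univ, if_pos hs1, if_pos hs2]
      have hple : ENNReal.ofReal p ≤ 1 := by
        rw [← ENNReal.ofReal_one]
        exact ENNReal.ofReal_le_ofReal hp1.le
      exact (add_tsub_cancel_of_le hple).symm
    · have : X i ⁻¹' s = {ω | X i ω = 1} := by
        ext ω
        rcases hval i ω with h | h <;> simp [Set.mem_preimage, h, hs1, hs2]
      rw [this, hdist i, if_pos hs1, if_neg hs2, add_zero]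
    · have : X i ⁻¹' s = {ω | X i ω = -1} := by
        ext ω
        rcases hval i ω with h | h <;> simp [Set.mem_preimage, h, hs1, hs2]
      rw [this, hm1, if_neg hs1, if_pos hs2, zero_add]
    · have : X i ⁻¹' s = ∅ := by
        ext ω
        rcases hval i ω with h | h <;> simp [Set.mem_preimage, h, hs1, hs2]
      rw [this, measure_empty, if_neg hs1, if_neg hs2, add_zero]
  have hmarg : ∀ i, μ.map (X i) = μ.map (X 0) := by
    intro i
    refine Measure.ext fun s hs => ?_
    rw [Measure.map_apply (hmeas i) hs, Measure.map_apply (hmeas 0) hs, hpre i s, hpre 0 s]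
  set ν : Measure ℤ := μ.map (X 0) with hν
  haveI : IsProbabilityMeasure ν := Measure.isProbabilityMeasure_map (hmeas 0).aemeasurable
  -- the random vector
  set vec : Ω → (Fin n → ℤ) := fun ω i => X i ω with hvec
  have hvecmeas : Measurable vec := measurable_pi_lambda _ fun i => hmeas i
  -- joint law is the product measure
  have hjoint : μ.map vec = Measure.pi (fun _ : Fin n => ν) := by
    refine (Measure.pi_eq fun s hs => ?_).symm
    rw [Measure.map_apply hvecmeas (MeasurableSet.univ_pi hs)]
    classical
    set sets : ℕ → Set ℤ := fun i => if h : i < n then s ⟨i, h⟩ else Set.univ with hsets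
    have hpre2 : vec ⁻¹' (Set.pi Set.univ s) = ⋂ i ∈ Finset.range n, X i ⁻¹' sets i := by
      ext ω
      simp only [Set.mem_preimage, Set.mem_pi, Set.mem_univ, forall_true_left,
        Set.mem_iInter, Finset.mem_range, hsets]
      constructor
      · intro h i hi
        simpa [dif_pos hi] using h ⟨i, hi⟩
      · intro h i
        have := h i.val i.isLt
        simpa [dif_pos i.isLt] using this
    rw [hpre2, hindep.measure_inter_preimage_eq_mul (Finset.range n)
      (fun i _ => by by_cases h : i < n <;> simp [hsets, h, MeasurableSet.of_discrete])]
    rw [← Fin.prod_univ_eq_prod_range (fun i => μ (X i ⁻¹' sets i)) n]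
    refine Finset.prod_congr rfl fun i _ => ?_
    have : sets i.val = s i := by simp [hsets, i.isLt]
    rw [this, ← Measure.map_apply (hmeas i.val) (hs i), hmarg i.val]
  -- rotation invariance of the product measure
  have hperm : ∀ (e : Fin n ≃ Fin n) (B : Set (Fin n → ℤ)), MeasurableSet B →
      Measure.pi (fun _ : Fin n => ν) ((fun v : Fin n → ℤ => v ∘ e) ⁻¹' B)
        = Measure.pi (fun _ : Fin n => ν) B := by
    intro e B hB
    have hmp := MeasureTheory.measurePreserving_piCongrLeft (fun _ : Fin n => ν) e.symm
    have hfun : ⇑(MeasurableEquiv.piCongrLeft (fun _ : Fin n => ℤ) e.symm)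
        = fun v : Fin n → ℤ => v ∘ e := by
      funext v
      funext i
      rw [MeasurableEquiv.coe_piCongrLeft]
      have := Equiv.piCongrLeft_apply_apply (fun _ : Fin n => ℤ) e.symm v (e i)
      simpa using this
    have := hmp.measure_preimage hB.nullMeasurableSet
    rwa [hfun] at this
  -- the basic event
  set B0 : Set (Fin n → ℤ) :=
    {v | ∀ k, 1 ≤ k → k ≤ n → ∑ i ∈ Finset.range k, v ⟨i % n, Nat.mod_lt i hn0⟩ < 0} with hB0def
  have hB0 : MeasurableSet B0 := by
    have : B0 = ⋂ (k : ℕ) (_ : 1 ≤ k) (_ : k ≤ n),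
        {v : Fin n → ℤ | ∑ i ∈ Finset.range k, v ⟨i % n, Nat.mod_lt i hn0⟩ < 0} := by
      ext v; simp [hB0def, Set.mem_iInter]
    rw [this]
    refine MeasurableSet.iInter fun k => MeasurableSet.iInter fun _ =>
      MeasurableSet.iInter fun _ => ?_
    have hg : Measurable fun v : Fin n → ℤ =>
        ∑ i ∈ Finset.range k, v ⟨i % n, Nat.mod_lt i hn0⟩ :=
      Finset.measurable_sum _ fun i _ => measurable_pi_apply _
    have heq : {v : Fin n → ℤ | ∑ i ∈ Finset.range k, v ⟨i % n, Nat.mod_lt i hn0⟩ < 0}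
        = (fun v : Fin n → ℤ => ∑ i ∈ Finset.range k, v ⟨i % n, Nat.mod_lt i hn0⟩) ⁻¹'
          (Set.Iio 0) := rfl
    rw [heq]
    exact hg MeasurableSet.of_discrete
  -- the rotated events
  set A : ℕ → Set Ω := fun r =>
    vec ⁻¹' ((fun v : Fin n → ℤ => v ∘ Equiv.addLeft (@Nat.cast (Fin n) (Fin.NatCast.instNatCast n) r)) ⁻¹' B0) with hA
  have hAmem : ∀ r ω, r < n → (ω ∈ A r ↔
      ∀ k, 1 ≤ k → k ≤ n → ∑ i ∈ Finset.range k, X ((r + i) % n) ω < 0) := by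
    intro r ω hr
    simp only [hA, Set.mem_preimage, hB0def, Set.mem_setOf_eq]
    constructor <;> intro h k hk1 hkn <;>
    · have := h k hk1 hkn
      refine lt_of_eq_of_lt (Finset.sum_congr rfl fun i hi => ?_) this
      have hi' : i < n := lt_of_lt_of_le (Finset.mem_range.mp hi) hkn
      simp only [Function.comp_apply, Equiv.coe_addLeft, hvec]
      congr 1
      simp [Fin.add_def, Fin.val_natCast, Nat.mod_eq_of_lt hi', Nat.mod_eq_of_lt hr,
        Nat.add_mod]
  -- each rotated event has the same measure
  have hAmeasure : ∀ r : ℕ, μ (A r) = μ (A 0) := by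
    intro r
    have h1 : ∀ r : ℕ, μ (A r) = Measure.pi (fun _ : Fin n => ν) B0 := by
      intro r
      have hBr : MeasurableSet ((fun v : Fin n → ℤ => v ∘ Equiv.addLeft (@Nat.cast (Fin n) (Fin.NatCast.instNatCast n) r)) ⁻¹' B0) := by
        refine measurable_pi_lambda _ (fun i => measurable_pi_apply _) hB0
      rw [hA]
      rw [← Measure.map_apply hvecmeas hBr, hjoint, hperm _ _ hB0]
    rw [h1 r, h1 0]
  -- union bound
  have hcover : {ω | ∑ i ∈ Finset.range n, X i ω < 0} ⊆ ⋃ r ∈ Finset.range n, A r := by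
    intro ω hω
    obtain ⟨r, hr, hrprop⟩ := cycle_exists n hn0 (fun i => X i ω) hω
    exact Set.mem_biUnion (Finset.mem_range.mpr hr) ((hAmem r ω hr).mpr hrprop)
  have hbound : μ {ω | ∑ i ∈ Finset.range n, X i ω < 0} ≤ n * μ (A 0) := by
    calc μ {ω | ∑ i ∈ Finset.range n, X i ω < 0}
        ≤ μ (⋃ r ∈ Finset.range n, A r) := measure_mono hcover
      _ ≤ ∑ r ∈ Finset.range n, μ (A r) := measure_biUnion_finset_le _ _
      _ = ∑ r ∈ Finset.range n, μ (A 0) := Finset.sum_congr rfl fun r _ => hAmeasure r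
      _ = n * μ (A 0) := by rw [Finset.sum_const, Finset.card_range, nsmul_eq_mul]
  -- identify A 0 with the target event
  have hA0 : A 0 = {ω | ∀ k, 1 ≤ k → k ≤ n → ∑ i ∈ Finset.range k, X i ω < 0} := by
    ext ω
    rw [Set.mem_setOf_eq, hAmem 0 ω hn0]
    constructor <;> intro h k hk1 hkn <;>
    · have := h k hk1 hkn
      refine lt_of_eq_of_lt (Finset.sum_congr rfl fun i hi => ?_) this
      have hi' : i < n := lt_of_lt_of_le (Finset.mem_range.mp hi) hkn
      simp [Nat.mod_eq_of_lt hi']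
  rw [← hA0]
  -- final arithmetic
  have hfin : μ (A 0) ≠ ⊤ := measure_ne_top μ _
  have htr : (μ {ω | ∑ i ∈ Finset.range n, X i ω < 0}).toReal ≤ n * (μ (A 0)).toReal := by
    have := ENNReal.toReal_mono (by finiteness) hbound
    rwa [ENNReal.toReal_mul, ENNReal.toReal_natCast] at this
  rw [div_mul_eq_mul_div, one_mul, div_le_iff₀ (by positivity : (0:ℝ) < (n:ℝ))]
  linarith [htr]
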